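/- For the Bernoulli sieve with n balls, the expected number of empty boxes within the occupancy range admits the explicit binomial-alternating-sum formula E[L_n] = ∑_{k=1}^n (−1)^{k+1} C(n,k) (1 − E[(1−W)^k])/(1 − E[W^k]). -/

import Mathlib

open MeasureTheory ProbabilityTheory Filter Set

/-- Box of ball with mark `u`, for stick-breaking residuals `Q k = W_1 ⋯ W_k`:
the (1-based) index of the interval `(Q_k, Q_{k-1})` containing `u`. -/
noncomputable def sieveBox (W : ℕ → ℝ) (u : ℝ) : ℕ :=
  sInf {k : ℕ | ∏ i ∈ Finset.range k, W i < u}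

/-- Index of the last occupied box (occupancy range) after `n` balls. -/
noncomputable def sieveM (W : ℕ → ℝ) (U : ℕ → ℝ) (n : ℕ) : ℕ :=
  (Finset.range n).sup (fun j => sieveBox W (U j))

/-- Number of occupied boxes after `n` balls. -/
noncomputable def sieveK (W : ℕ → ℝ) (U : ℕ → ℝ) (n : ℕ) : ℕ :=
  ((Finset.range n).image (fun j => sieveBox W (U j))).card

/-- Number of empty boxes within the occupancy range after `n` balls. -/
noncomputable def sieveL (W : ℕ → ℝ) (U : ℕ → ℝ) (n : ℕ) : ℕ :=
  sieveM W U n - sieveK W U n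


open MeasureTheory ProbabilityTheory Filter Set
open scoped Topology ENNReal
set_option linter.unusedSectionVars false

lemma integral_pi_prod' : ∀ (m : ℕ) (μs : Fin m → Measure ℝ), (∀ i, IsProbabilityMeasure (μs i)) →
    ∀ (g : Fin m → ℝ → ℝ),
    ∫ x, ∏ i, g i (x i) ∂(Measure.pi μs) = ∏ i, ∫ t, g i t ∂(μs i) := by
  intro m
  induction m with
  | zero =>
      intro μs hp g
      haveI := hp
      simp only [Finset.univ_eq_empty, Finset.prod_empty, integral_const, measure_univ,
        ENNReal.toReal_one, probReal_univ, smul_eq_mul, mul_one, one_smul]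
  | succ m ih =>
      intro μs hp g
      haveI := hp
      calc
        _ = ∫ x : ℝ × (Fin m → ℝ),
            g 0 x.1 * ∏ i : Fin m, g (Fin.succ i) (x.2 i)
              ∂((μs 0).prod (Measure.pi fun i => μs (Fin.succ i))) := by
          rw [← ((measurePreserving_piFinSuccAbove μs 0).symm).integral_comp']
          simp_rw [MeasurableEquiv.piFinSuccAbove_symm_apply, Fin.insertNthEquiv,
            Fin.prod_univ_succ, Fin.insertNth_zero, Equiv.coe_fn_mk, Fin.cons_succ,
            Fin.zero_succAbove, cast_eq, Fin.cons_zero]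
        _ = (∫ t, g 0 t ∂(μs 0)) * ∏ i : Fin m, ∫ t, g (Fin.succ i) t ∂(μs (Fin.succ i)) := by
          rw [← ih _ (fun i => hp _) _, ← integral_prod_mul]
        _ = ∏ i, ∫ t, g i t ∂(μs i) := by rw [Fin.prod_univ_succ]

lemma nu_prob : IsProbabilityMeasure (volume.restrict (Set.Ioo (0:ℝ) 1)) :=
  ⟨by rw [Measure.restrict_apply_univ, Real.volume_Ioo]; norm_num⟩

lemma nu_Ioc {a b : ℝ} (ha : 0 < a) (hb : b ≤ 1) :
    (volume.restrict (Set.Ioo (0:ℝ) 1)) (Set.Ioc a b) = ENNReal.ofReal (b - a) := by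
  rw [Measure.restrict_apply measurableSet_Ioc]
  rcases le_or_gt b a with h | h
  · rw [Set.Ioc_eq_empty (not_lt.2 h), Set.empty_inter, measure_empty,
      eq_comm, ENNReal.ofReal_eq_zero]
    linarith
  · apply le_antisymm
    · calc volume (Set.Ioc a b ∩ Set.Ioo 0 1) ≤ volume (Set.Ioc a b) :=
            measure_mono inter_subset_left
        _ = ENNReal.ofReal (b - a) := Real.volume_Ioc
    · calc ENNReal.ofReal (b - a) = volume (Set.Ioo a b) := Real.volume_Ioo.symm
        _ ≤ volume (Set.Ioc a b ∩ Set.Ioo 0 1) := measure_mono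
            (fun x hx => ⟨⟨hx.1, le_of_lt hx.2⟩, lt_trans ha hx.1, lt_of_lt_of_le hx.2 hb⟩)

lemma nu_Ioi {a : ℝ} (ha : 0 < a) (h1 : a ≤ 1) :
    (volume.restrict (Set.Ioo (0:ℝ) 1)) (Set.Ioi a) = ENNReal.ofReal (1 - a) := by
  rw [Measure.restrict_apply measurableSet_Ioi]
  have : Set.Ioi a ∩ Set.Ioo 0 1 = Set.Ioo a 1 := by
    ext x
    constructor
    · rintro ⟨hx, _, hx1⟩; exact ⟨hx, hx1⟩
    · rintro ⟨hx, hx1⟩; exact ⟨hx, lt_trans ha hx, hx1⟩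
  rw [this, Real.volume_Ioo]

lemma ae_pi_Ioo (μ : Measure ℝ) [IsProbabilityMeasure μ] (hμ : ∀ᵐ t ∂μ, t ∈ Set.Ioo (0:ℝ) 1)
    (m : ℕ) :
    ∀ᵐ x ∂(Measure.pi fun _ : Fin m => μ), ∀ i, x i ∈ Set.Ioo (0:ℝ) 1 := by
  have h0 : μ (Set.Ioo (0:ℝ) 1)ᶜ = 0 := by
    rw [ae_iff] at hμ
    exact hμ
  have h1 : μ (Set.Ioo (0:ℝ) 1) = 1 := by
    have := prob_compl_eq_one_sub (μ := μ) (s := Set.Ioo (0:ℝ) 1) measurableSet_Ioo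
    rw [h0] at this
    exact le_antisymm prob_le_one (by
      rwa [eq_comm, tsub_eq_zero_iff_le] at this)
  rw [ae_iff]
  have hset : {x : Fin m → ℝ | ¬ ∀ i, x i ∈ Set.Ioo (0:ℝ) 1}
      = (Set.pi Set.univ fun _ : Fin m => Set.Ioo (0:ℝ) 1)ᶜ := by
    ext x; simp [Set.mem_pi]
  rw [hset, prob_compl_eq_one_sub (MeasurableSet.univ_pi fun _ => measurableSet_Ioo),
    Measure.pi_pi]
  simp [h1]

section Aux
variable {Ω : Type*} [MeasureSpace Ω] [IsProbabilityMeasure (ℙ : Measure Ω)]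

lemma iIndepFun_reindex {ι ι' : Type*} {f : ι → Ω → ℝ}
    (h : iIndepFun f ℙ) {e : ι' → ι} (he : Function.Injective e) :
    iIndepFun (fun i => f (e i)) ℙ := by
  classical
  rw [iIndepFun_iff_measure_inter_preimage_eq_mul] at h ⊢
  intro S sets hsets
  set sets' : ι → Set ℝ := fun j => ⋂ i ∈ S.filter (fun i => e i = j), sets i with hsets'def
  have hkey : ∀ i ∈ S, sets' (e i) = sets i := by
    intro i hi
    have hfil : S.filter (fun i' => e i' = e i) = {i} := by
      ext x
      simp only [Finset.mem_filter, Finset.mem_singleton]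
      constructor
      · rintro ⟨_, hex⟩; exact he hex
      · rintro rfl; exact ⟨hi, rfl⟩
    show (⋂ x ∈ S.filter (fun i' => e i' = e i), sets x) = sets i
    rw [hfil]
    simp
  have hmeas' : ∀ j, j ∈ S.image e → MeasurableSet (sets' j) := by
    intro j _
    exact MeasurableSet.biInter (Finset.countable_toSet _)
      (fun i hi => hsets i (Finset.mem_filter.1 hi).1)
  have hmain := h (S.image e) hmeas'
  rw [Finset.set_biInter_finset_image, Finset.prod_image
    (fun i hi j hj hij => he hij)] at hmain
  calc ℙ (⋂ i ∈ S, (fun ω => f (e i) ω) ⁻¹' sets i)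
      = ℙ (⋂ i ∈ S, f (e i) ⁻¹' sets' (e i)) := by
        congr 1; apply Set.iInter₂_congr; intro i hi; rw [hkey i hi]
    _ = ∏ i ∈ S, ℙ (f (e i) ⁻¹' sets' (e i)) := hmain
    _ = ∏ i ∈ S, ℙ ((fun ω => f (e i) ω) ⁻¹' sets i) := by
        apply Finset.prod_congr rfl; intro i hi; rw [hkey i hi]

lemma map_pi_of_iIndepFun {ι : Type*} [Fintype ι] (X : ι → Ω → ℝ)
    (hX : ∀ i, Measurable (X i)) (h : iIndepFun X ℙ) :
    Measure.map (fun ω i => X i ω) ℙ = Measure.pi (fun i => Measure.map (X i) ℙ) := by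
  haveI : ∀ i, IsProbabilityMeasure (Measure.map (X i) ℙ) :=
    fun i => Measure.isProbabilityMeasure_map (hX i).aemeasurable
  refine (Measure.pi_eq fun s hs => ?_).symm
  rw [Measure.map_apply (measurable_pi_lambda _ hX) (MeasurableSet.univ_pi hs)]
  have hpre : (fun ω i => X i ω) ⁻¹' (Set.pi Set.univ s)
      = ⋂ i ∈ (Finset.univ : Finset ι), X i ⁻¹' s i := by
    ext ω; simp [Set.mem_pi]
  rw [hpre, h.measure_inter_preimage_eq_mul Finset.univ (fun i _ => hs i)]
  exact Finset.prod_congr rfl fun i _ => (Measure.map_apply (hX i) (hs i)).symm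

lemma joint_law (W U : ℕ → Ω → ℝ) (hWmeas : ∀ k, Measurable (W k)) (hUmeas : ∀ j, Measurable (U j))
    (hindep : iIndepFun (Sum.elim W U : ℕ ⊕ ℕ → Ω → ℝ) ℙ)
    (hWid : ∀ k, Measure.map (W k) ℙ = Measure.map (W 0) ℙ)
    (hUunif : ∀ j, Measure.map (U j) ℙ = volume.restrict (Set.Ioo (0:ℝ) 1))
    (m n : ℕ) :
    Measure.map (fun ω => (fun i : Fin m => W i ω, fun j : Fin n => U j ω)) ℙ
      = (Measure.pi fun _ : Fin m => Measure.map (W 0) ℙ).prod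
        (Measure.pi fun _ : Fin n => volume.restrict (Set.Ioo (0:ℝ) 1)) := by
  have hWv : iIndepFun (fun i : Fin m => W i.val) ℙ :=
    iIndepFun_reindex hindep
      (e := fun i : Fin m => (Sum.inl i.val : ℕ ⊕ ℕ))
      (fun a b hab => Fin.val_injective (Sum.inl.inj hab))
  have hUv : iIndepFun (fun j : Fin n => U j.val) ℙ :=
    iIndepFun_reindex hindep
      (e := fun j : Fin n => (Sum.inr j.val : ℕ ⊕ ℕ))
      (fun a b hab => Fin.val_injective (Sum.inr.inj hab))
  have hmapW : Measure.map (fun ω (i : Fin m) => W i ω) ℙ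
      = Measure.pi (fun _ : Fin m => Measure.map (W 0) ℙ) := by
    rw [map_pi_of_iIndepFun (fun i : Fin m => W i.val) (fun i => hWmeas i.val) hWv]
    exact congrArg Measure.pi (funext fun i => hWid i)
  have hmapU : Measure.map (fun ω (j : Fin n) => U j ω) ℙ
      = Measure.pi (fun _ : Fin n => volume.restrict (Set.Ioo (0:ℝ) 1)) := by
    rw [map_pi_of_iIndepFun (fun j : Fin n => U j.val) (fun j => hUmeas j.val) hUv]
    exact congrArg Measure.pi (funext fun j => hUunif j)
  have hmemW : ∀ i : Fin m, (Sum.inl i.val : ℕ ⊕ ℕ) ∈ (Finset.range m).image Sum.inl :=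
    fun i => Finset.mem_image_of_mem _ (Finset.mem_range.2 i.isLt)
  have hmemU : ∀ j : Fin n, (Sum.inr j.val : ℕ ⊕ ℕ) ∈ (Finset.range n).image Sum.inr :=
    fun j => Finset.mem_image_of_mem _ (Finset.mem_range.2 j.isLt)
  have hdisj : Disjoint ((Finset.range m).image (Sum.inl : ℕ → ℕ ⊕ ℕ))
      ((Finset.range n).image (Sum.inr : ℕ → ℕ ⊕ ℕ)) := by
    rw [Finset.disjoint_left]
    rintro x hx hy
    rcases Finset.mem_image.1 hx with ⟨a, _, rfl⟩
    rcases Finset.mem_image.1 hy with ⟨b, _, hb⟩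
    simp at hb
  have hmeasAll : ∀ i : ℕ ⊕ ℕ, Measurable (Sum.elim W U i) := by
    rintro (i | j); exacts [hWmeas i, hUmeas j]
  have hIndep2 : IndepFun (fun ω (i : Fin m) => W i ω) (fun ω (j : Fin n) => U j ω) ℙ := by
    have h := hindep.indepFun_finset _ _ hdisj hmeasAll
    have h2 := h.comp
      (φ := fun (v : ((Finset.range m).image (Sum.inl : ℕ → ℕ ⊕ ℕ) : Finset (ℕ ⊕ ℕ)) → ℝ)
          (i : Fin m) => v ⟨Sum.inl i.val, hmemW i⟩)
      (ψ := fun (v : ((Finset.range n).image (Sum.inr : ℕ → ℕ ⊕ ℕ) : Finset (ℕ ⊕ ℕ)) → ℝ)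
          (j : Fin n) => v ⟨Sum.inr j.val, hmemU j⟩)
      (measurable_pi_lambda _ (fun i => measurable_pi_apply _))
      (measurable_pi_lambda _ (fun j => measurable_pi_apply _))
    exact h2
  have := (indepFun_iff_map_prod_eq_prod_map_map
    (measurable_pi_lambda _ (fun i : Fin m => hWmeas i)).aemeasurable
    (measurable_pi_lambda _ (fun j : Fin n => hUmeas j)).aemeasurable).1 hIndep2
  rw [this, hmapW, hmapU]


lemma prob_forall_mem (W U : ℕ → Ω → ℝ) (hWmeas : ∀ k, Measurable (W k))
    (hUmeas : ∀ j, Measurable (U j))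
    (hindep : iIndepFun (Sum.elim W U : ℕ ⊕ ℕ → Ω → ℝ) ℙ)
    (hWid : ∀ k, Measure.map (W k) ℙ = Measure.map (W 0) ℙ)
    (hUunif : ∀ j, Measure.map (U j) ℙ = volume.restrict (Set.Ioo (0:ℝ) 1))
    (m n : ℕ) (s : (Fin m → ℝ) → Set ℝ)
    (hs : MeasurableSet {p : (Fin m → ℝ) × ℝ | p.2 ∈ s p.1})
    (F : (Fin m → ℝ) → ℝ) (hF : Measurable F)
    (hνs : ∀ᵐ x ∂(Measure.pi fun _ : Fin m => Measure.map (W 0) ℙ),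
        (volume.restrict (Set.Ioo (0:ℝ) 1)) (s x) = ENNReal.ofReal (F x) ∧ F x ∈ Set.Icc 0 1) :
    ℙ {ω | ∀ j : Fin n, U j ω ∈ s (fun i : Fin m => W i ω)}
      = ENNReal.ofReal (∫ x, F x ^ n ∂(Measure.pi fun _ : Fin m => Measure.map (W 0) ℙ)) := by
  haveI := nu_prob
  haveI : IsProbabilityMeasure (Measure.map (W 0) ℙ) :=
    Measure.isProbabilityMeasure_map (hWmeas 0).aemeasurable
  set πW := (Measure.pi fun _ : Fin m => Measure.map (W 0) ℙ) with hπW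
  set πU := (Measure.pi fun _ : Fin n => volume.restrict (Set.Ioo (0:ℝ) 1)) with hπU
  set A : Set ((Fin m → ℝ) × (Fin n → ℝ)) := {p | ∀ j, p.2 j ∈ s p.1} with hAdef
  have hA : MeasurableSet A := by
    have : A = ⋂ j : Fin n,
        (fun p : (Fin m → ℝ) × (Fin n → ℝ) => (p.1, p.2 j)) ⁻¹' {q : (Fin m → ℝ) × ℝ | q.2 ∈ s q.1} := by
      ext p; simp [hAdef]
    rw [this]
    exact MeasurableSet.iInter fun j =>
      (measurable_fst.prodMk ((measurable_pi_apply j).comp measurable_snd)) hs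
  have hT : Measurable (fun ω => ((fun i : Fin m => W i ω), (fun j : Fin n => U j ω))) :=
    (measurable_pi_lambda (fun ω (i : Fin m) => W i ω) fun i => hWmeas i).prodMk
      (measurable_pi_lambda (fun ω (j : Fin n) => U j ω) fun j => hUmeas j)
  have h1 : ℙ {ω | ∀ j : Fin n, U j ω ∈ s (fun i : Fin m => W i ω)}
      = (Measure.map (fun ω => ((fun i : Fin m => W i ω), (fun j : Fin n => U j ω))) ℙ) A := by
    rw [Measure.map_apply hT hA]
    rfl
  rw [h1, joint_law W U hWmeas hUmeas hindep hWid hUunif m n, Measure.prod_apply hA]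
  have h2 : ∀ x : Fin m → ℝ, (Prod.mk x ⁻¹' A) = Set.pi Set.univ (fun _ : Fin n => s x) := by
    intro x; ext u; simp [hAdef, Set.mem_pi]
  calc ∫⁻ x, πU (Prod.mk x ⁻¹' A) ∂πW
      = ∫⁻ x, ENNReal.ofReal (F x ^ n) ∂πW := by
        apply lintegral_congr_ae
        filter_upwards [hνs] with x hx
        rw [h2, hπU, Measure.pi_pi, Finset.prod_const, hx.1, ← ENNReal.ofReal_pow hx.2.1]
        simp
    _ = ENNReal.ofReal (∫ x, F x ^ n ∂πW) := by
        rw [← ofReal_integral_eq_lintegral_ofReal]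
        · exact Integrable.mono' (integrable_const 1) (hF.pow_const n).aestronglyMeasurable
            (by
              filter_upwards [hνs] with x hx
              rw [Real.norm_eq_abs, abs_of_nonneg (pow_nonneg hx.2.1 n)]
              exact pow_le_one₀ hx.2.1 hx.2.2)
        · filter_upwards [hνs] with x hx
          exact pow_nonneg hx.2.1 n

end Aux

lemma int_term (μ : Measure ℝ) [IsProbabilityMeasure μ] (k j : ℕ) (glast : ℝ → ℝ) :
    ∫ x : Fin (k+1) → ℝ, (∏ i : Fin k, x i.castSucc)^j * glast (x (Fin.last k))
      ∂(Measure.pi fun _ => μ)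
    = (∫ t, t^j ∂μ)^k * ∫ t, glast t ∂μ := by
  classical
  have hpt : (fun x : Fin (k+1) → ℝ => (∏ i : Fin k, x i.castSucc)^j * glast (x (Fin.last k)))
      = fun x => ∏ i : Fin (k+1), (fun (i : Fin (k+1)) (t : ℝ) =>
          if i = Fin.last k then glast t else t^j) i (x i) := by
    funext x
    rw [Fin.prod_univ_castSucc]
    simp only [if_pos rfl]
    congr 1
    rw [← Finset.prod_pow]
    refine Finset.prod_congr rfl fun i _ => ?_
    rw [if_neg (Fin.castSucc_lt_last i).ne]
  rw [hpt, integral_pi_prod' (k+1) (fun _ => μ) (fun _ => inferInstance)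
    (fun (i : Fin (k+1)) (t : ℝ) => if i = Fin.last k then glast t else t ^ j),
    Fin.prod_univ_castSucc]
  simp only [if_pos rfl]
  congr 1
  calc ∏ i : Fin k, ∫ t, (if i.castSucc = Fin.last k then glast t else t^j) ∂μ
      = ∏ _i : Fin k, ∫ t, t^j ∂μ := by
        refine Finset.prod_congr rfl fun i _ => ?_
        simp only [if_neg (Fin.castSucc_lt_last i).ne]
    _ = (∫ t, t^j ∂μ)^k := by rw [Finset.prod_const, Finset.card_univ, Fintype.card_fin]

lemma intA (μ : Measure ℝ) [IsProbabilityMeasure μ] (hμ : ∀ᵐ t ∂μ, t ∈ Set.Ioo (0:ℝ) 1)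
    (k nn : ℕ) :
    ∫ x : Fin (k+1) → ℝ, (1 - ((∏ i : Fin k, x i.castSucc) - ∏ i, x i))^nn
      ∂(Measure.pi fun _ => μ)
    = ∑ j ∈ Finset.range (nn+1), (nn.choose j : ℝ) *
        ((-1)^j * ((∫ t, t^j ∂μ)^k * (∫ t, (1-t)^j ∂μ))) := by
  have haex := ae_pi_Ioo μ hμ (k+1)
  have hrw : (fun x : Fin (k+1) → ℝ => (1 - ((∏ i : Fin k, x i.castSucc) - ∏ i, x i))^nn)
      = fun x => ∑ j ∈ Finset.range (nn+1),
          ((∏ i : Fin k, x i.castSucc)^j * (x (Fin.last k) - 1)^j) * (nn.choose j : ℝ) := by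
    funext x
    have e1 : ∏ i : Fin (k+1), x i = (∏ i : Fin k, x i.castSucc) * x (Fin.last k) :=
      Fin.prod_univ_castSucc _
    have e2 : (1:ℝ) - ((∏ i : Fin k, x i.castSucc) - ∏ i, x i)
        = ((∏ i : Fin k, x i.castSucc) * (x (Fin.last k) - 1)) + 1 := by rw [e1]; ring
    rw [e2, add_pow]
    refine Finset.sum_congr rfl fun j _ => ?_
    rw [one_pow, mul_one, mul_pow]
  rw [hrw, integral_finset_sum]
  · refine Finset.sum_congr rfl fun j hj => ?_
    rw [integral_mul_const, int_term μ k j (fun t => (t-1)^j)]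
    have hneg : ∫ t, (t-1)^j ∂μ = (-1)^j * ∫ t, (1-t)^j ∂μ := by
      rw [← integral_const_mul]
      congr 1
      funext t
      rw [show t - 1 = -(1-t) by ring, neg_pow]
    rw [hneg]
    ring
  · intro j _
    apply Integrable.mono' (integrable_const ((nn.choose j : ℝ)))
    · exact ((((Finset.measurable_prod Finset.univ (fun i _ =>
        measurable_pi_apply i.castSucc)).pow_const j).mul
        (((measurable_pi_apply (Fin.last k)).sub_const 1).pow_const j)).mul_const
        _).aestronglyMeasurable
    · filter_upwards [haex] with x hx
      have h0 : 0 ≤ ∏ i : Fin k, x i.castSucc :=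
        Finset.prod_nonneg fun i _ => (hx i.castSucc).1.le
      have h1 : (∏ i : Fin k, x i.castSucc) ≤ 1 :=
        Finset.prod_le_one (fun i _ => (hx i.castSucc).1.le) (fun i _ => (hx i.castSucc).2.le)
      have h2 : |x (Fin.last k) - 1| ≤ 1 := by
        rw [abs_le]
        constructor
        · linarith [(hx (Fin.last k)).1]
        · linarith [(hx (Fin.last k)).2]
      rw [Real.norm_eq_abs, abs_mul, abs_mul, abs_pow, abs_pow]
      have hb1 : |∏ i : Fin k, x i.castSucc|^j ≤ 1 :=
        pow_le_one₀ (abs_nonneg _) (by rwa [abs_of_nonneg h0])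
      have hb2 : |x (Fin.last k) - 1|^j ≤ 1 := pow_le_one₀ (abs_nonneg _) h2
      have hb3 : |(nn.choose j : ℝ)| = (nn.choose j : ℝ) := abs_of_nonneg (Nat.cast_nonneg _)
      rw [hb3]
      have hab : |∏ i : Fin k, x i.castSucc|^j * |x (Fin.last k) - 1|^j ≤ 1 := by
        calc |∏ i : Fin k, x i.castSucc|^j * |x (Fin.last k) - 1|^j ≤ 1 * 1 :=
              mul_le_mul hb1 hb2 (pow_nonneg (abs_nonneg _) _) zero_le_one
          _ = 1 := mul_one 1
      exact le_trans (mul_le_mul_of_nonneg_right hab (Nat.cast_nonneg _)) (le_of_eq (one_mul _))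

lemma intB (μ : Measure ℝ) [IsProbabilityMeasure μ] (hμ : ∀ᵐ t ∂μ, t ∈ Set.Ioo (0:ℝ) 1)
    (k nn : ℕ) :
    ∫ x : Fin (k+1) → ℝ, (1 - ∏ i : Fin k, x i.castSucc)^nn
      ∂(Measure.pi fun _ => μ)
    = ∑ j ∈ Finset.range (nn+1), (nn.choose j : ℝ) * ((-1)^j * (∫ t, t^j ∂μ)^k) := by
  have haex := ae_pi_Ioo μ hμ (k+1)
  have hrw : (fun x : Fin (k+1) → ℝ => (1 - ∏ i : Fin k, x i.castSucc)^nn)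
      = fun x => ∑ j ∈ Finset.range (nn+1),
          ((∏ i : Fin k, x i.castSucc)^j * ((-1:ℝ))^j) * (nn.choose j : ℝ) := by
    funext x
    have e2 : (1:ℝ) - (∏ i : Fin k, x i.castSucc)
        = ((∏ i : Fin k, x i.castSucc) * (-1)) + 1 := by ring
    rw [e2, add_pow]
    refine Finset.sum_congr rfl fun j _ => ?_
    rw [one_pow, mul_one, mul_pow]
  rw [hrw, integral_finset_sum]
  · refine Finset.sum_congr rfl fun j hj => ?_
    have : (fun x : Fin (k+1) → ℝ => ((∏ i : Fin k, x i.castSucc)^j * ((-1:ℝ))^j)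
        * (nn.choose j : ℝ))
        = fun x => ((∏ i : Fin k, x i.castSucc)^j
            * (fun _t : ℝ => ((-1:ℝ))^j * (nn.choose j : ℝ)) (x (Fin.last k))) := by
      funext x; ring
    rw [this, int_term μ k j (fun _t => ((-1:ℝ))^j * (nn.choose j : ℝ)), integral_const]
    simp only [measure_univ, ENNReal.toReal_one, probReal_univ, one_smul, smul_eq_mul]
    ring
  · intro j _
    apply Integrable.mono' (integrable_const ((nn.choose j : ℝ)))
    · exact ((((Finset.measurable_prod Finset.univ (fun i _ =>
        measurable_pi_apply i.castSucc)).pow_const j).mul_const _).mul_const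
        _).aestronglyMeasurable
    · filter_upwards [haex] with x hx
      have h0 : 0 ≤ ∏ i : Fin k, x i.castSucc :=
        Finset.prod_nonneg fun i _ => (hx i.castSucc).1.le
      have h1 : (∏ i : Fin k, x i.castSucc) ≤ 1 :=
        Finset.prod_le_one (fun i _ => (hx i.castSucc).1.le) (fun i _ => (hx i.castSucc).2.le)
      rw [Real.norm_eq_abs, abs_mul, abs_mul, abs_pow, abs_pow]
      have hb1 : |∏ i : Fin k, x i.castSucc|^j ≤ 1 :=
        pow_le_one₀ (abs_nonneg _) (by rwa [abs_of_nonneg h0])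
      have hb2 : |(-1:ℝ)|^j ≤ 1 := by simp
      have hb3 : |(nn.choose j : ℝ)| = (nn.choose j : ℝ) := abs_of_nonneg (Nat.cast_nonneg _)
      rw [hb3]
      have hab : |∏ i : Fin k, x i.castSucc|^j * |(-1:ℝ)|^j ≤ 1 := by
        calc |∏ i : Fin k, x i.castSucc|^j * |(-1:ℝ)|^j ≤ 1 * 1 :=
              mul_le_mul hb1 hb2 (pow_nonneg (abs_nonneg _) _) zero_le_one
          _ = 1 := mul_one 1
      exact le_trans (mul_le_mul_of_nonneg_right hab (Nat.cast_nonneg _)) (le_of_eq (one_mul _))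

section Main
variable {Ω : Type*} [MeasureSpace Ω] [IsProbabilityMeasure (ℙ : Measure Ω)]
  (W U : ℕ → Ω → ℝ) (hWmeas : ∀ k, Measurable (W k)) (hUmeas : ∀ j, Measurable (U j))
  (hindep : iIndepFun (Sum.elim W U : ℕ ⊕ ℕ → Ω → ℝ) ℙ)
  (hWid : ∀ k, Measure.map (W k) ℙ = Measure.map (W 0) ℙ)
  (hWval : ∀ k, ∀ᵐ ω ∂ℙ, W k ω ∈ Set.Ioo (0 : ℝ) 1)
  (hUunif : ∀ j, Measure.map (U j) ℙ = volume.restrict (Set.Ioo (0:ℝ) 1))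

include hWmeas hUmeas hindep hWid hWval hUunif in
lemma probA (n k : ℕ) :
    ℙ {ω | ∀ j : Fin n, ¬((∏ i ∈ Finset.range (k+1), W i ω) < U j ω ∧
        U j ω ≤ ∏ i ∈ Finset.range k, W i ω)}
      = ENNReal.ofReal (∑ j ∈ Finset.range (n+1), (n.choose j : ℝ) *
          ((-1)^j * ((∫ t, t^j ∂(Measure.map (W 0) ℙ))^k *
            (∫ t, (1-t)^j ∂(Measure.map (W 0) ℙ)))))
    ∧ 0 ≤ ∑ j ∈ Finset.range (n+1), (n.choose j : ℝ) *
          ((-1)^j * ((∫ t, t^j ∂(Measure.map (W 0) ℙ))^k *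
            (∫ t, (1-t)^j ∂(Measure.map (W 0) ℙ)))) := by
  set μ := Measure.map (W 0) ℙ with hμdef
  haveI : IsProbabilityMeasure μ := Measure.isProbabilityMeasure_map (hWmeas 0).aemeasurable
  have hμae : ∀ᵐ t ∂μ, t ∈ Set.Ioo (0:ℝ) 1 :=
    (ae_map_iff (hWmeas 0).aemeasurable measurableSet_Ioo).2 (hWval 0)
  set q0 : (Fin (k+1) → ℝ) → ℝ := fun x => ∏ i : Fin k, x i.castSucc with hq0
  set q1 : (Fin (k+1) → ℝ) → ℝ := fun x => ∏ i : Fin (k+1), x i with hq1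
  have hq0m : Measurable q0 :=
    Finset.measurable_prod Finset.univ (fun i _ => measurable_pi_apply i.castSucc)
  have hq1m : Measurable q1 :=
    Finset.measurable_prod Finset.univ (fun i _ => measurable_pi_apply i)
  have hset : {ω | ∀ j : Fin n, ¬((∏ i ∈ Finset.range (k+1), W i ω) < U j ω ∧
        U j ω ≤ ∏ i ∈ Finset.range k, W i ω)}
      = {ω | ∀ j : Fin n, U j ω ∈
          (Set.Ioc (q1 (fun i : Fin (k+1) => W i ω)) (q0 (fun i : Fin (k+1) => W i ω)))ᶜ} := by
    ext ω
    have e0 : q0 (fun i : Fin (k+1) => W i ω) = ∏ i ∈ Finset.range k, W i ω := by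
      rw [hq0]
      exact Fin.prod_univ_eq_prod_range (fun i => W i ω) k
    have e1 : q1 (fun i : Fin (k+1) => W i ω) = ∏ i ∈ Finset.range (k+1), W i ω := by
      rw [hq1]
      exact Fin.prod_univ_eq_prod_range (fun i => W i ω) (k+1)
    simp only [Set.mem_setOf_eq, Set.mem_compl_iff, Set.mem_Ioc, e0, e1]
  rw [hset]
  have haex := ae_pi_Ioo μ hμae (k+1)
  have hcoord : ∀ᵐ x ∂(Measure.pi fun _ : Fin (k+1) => μ),
      0 ≤ q0 x ∧ q0 x ≤ 1 ∧ 0 < q1 x ∧ q1 x ≤ q0 x := by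
    filter_upwards [haex] with x hx
    have h0 : 0 ≤ q0 x := Finset.prod_nonneg fun i _ => (hx i.castSucc).1.le
    have h01 : q0 x ≤ 1 :=
      Finset.prod_le_one (fun i _ => (hx i.castSucc).1.le) (fun i _ => (hx i.castSucc).2.le)
    have h1pos : 0 < q1 x := Finset.prod_pos fun i _ => (hx i).1
    have h1le : q1 x ≤ q0 x := by
      have hsplit : q1 x = q0 x * x (Fin.last k) := Fin.prod_univ_castSucc x
      rw [hsplit]
      calc q0 x * x (Fin.last k) ≤ q0 x * 1 :=
            mul_le_mul_of_nonneg_left (hx (Fin.last k)).2.le h0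
        _ = q0 x := mul_one _
    exact ⟨h0, h01, h1pos, h1le⟩
  have hνs : ∀ᵐ x ∂(Measure.pi fun _ : Fin (k+1) => μ),
      (volume.restrict (Set.Ioo (0:ℝ) 1)) ((Set.Ioc (q1 x) (q0 x))ᶜ)
        = ENNReal.ofReal (1 - (q0 x - q1 x)) ∧ (1 - (q0 x - q1 x)) ∈ Set.Icc (0:ℝ) 1 := by
    filter_upwards [hcoord] with x hx
    obtain ⟨h0, h01, h1pos, h1le⟩ := hx
    constructor
    · haveI := nu_prob
      rw [prob_compl_eq_one_sub measurableSet_Ioc, nu_Ioc h1pos h01,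
        ← ENNReal.ofReal_one, ← ENNReal.ofReal_sub _ (sub_nonneg.2 h1le)]
    · exact ⟨by linarith, by linarith⟩
  have key := prob_forall_mem W U hWmeas hUmeas hindep hWid hUunif (k+1) n
    (fun x => (Set.Ioc (q1 x) (q0 x))ᶜ)
    (by
      have : {p : (Fin (k+1) → ℝ) × ℝ | p.2 ∈ (Set.Ioc (q1 p.1) (q0 p.1))ᶜ}
          = ({p : (Fin (k+1) → ℝ) × ℝ | q1 p.1 < p.2} ∩ {p | p.2 ≤ q0 p.1})ᶜ := by
        ext p; simp [Set.mem_Ioc, and_comm]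
      rw [this]
      exact (MeasurableSet.inter
        (measurableSet_lt (hq1m.comp measurable_fst) measurable_snd)
        (measurableSet_le measurable_snd (hq0m.comp measurable_fst))).compl)
    (fun x => 1 - (q0 x - q1 x)) (measurable_const.sub (hq0m.sub hq1m)) hνs
  have hI : ∫ x, (1 - (q0 x - q1 x)) ^ n ∂(Measure.pi fun _ : Fin (k+1) => μ)
      = ∑ j ∈ Finset.range (n+1), (n.choose j : ℝ) *
          ((-1)^j * ((∫ t, t^j ∂μ)^k * (∫ t, (1-t)^j ∂μ))) := by
    rw [hq0, hq1]
    exact intA μ hμae k n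
  constructor
  · rw [key, hI]
  · rw [← hI]
    apply integral_nonneg_of_ae
    filter_upwards [hcoord] with x hx
    exact pow_nonneg (by linarith [hx.1, hx.2.1, hx.2.2.1, hx.2.2.2]) n

include hWmeas hUmeas hindep hWid hWval hUunif in
lemma probB (n k : ℕ) :
    ℙ {ω | ∀ j : Fin n, (∏ i ∈ Finset.range k, W i ω) < U j ω}
      = ENNReal.ofReal (∑ j ∈ Finset.range (n+1), (n.choose j : ℝ) *
          ((-1)^j * (∫ t, t^j ∂(Measure.map (W 0) ℙ))^k))
    ∧ 0 ≤ ∑ j ∈ Finset.range (n+1), (n.choose j : ℝ) *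
          ((-1)^j * (∫ t, t^j ∂(Measure.map (W 0) ℙ))^k) := by
  set μ := Measure.map (W 0) ℙ with hμdef
  haveI : IsProbabilityMeasure μ := Measure.isProbabilityMeasure_map (hWmeas 0).aemeasurable
  have hμae : ∀ᵐ t ∂μ, t ∈ Set.Ioo (0:ℝ) 1 :=
    (ae_map_iff (hWmeas 0).aemeasurable measurableSet_Ioo).2 (hWval 0)
  set q0 : (Fin (k+1) → ℝ) → ℝ := fun x => ∏ i : Fin k, x i.castSucc with hq0
  have hq0m : Measurable q0 :=
    Finset.measurable_prod Finset.univ (fun i _ => measurable_pi_apply i.castSucc)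
  have hset : {ω | ∀ j : Fin n, (∏ i ∈ Finset.range k, W i ω) < U j ω}
      = {ω | ∀ j : Fin n, U j ω ∈ Set.Ioi (q0 (fun i : Fin (k+1) => W i ω))} := by
    ext ω
    have e0 : q0 (fun i : Fin (k+1) => W i ω) = ∏ i ∈ Finset.range k, W i ω := by
      rw [hq0]
      exact Fin.prod_univ_eq_prod_range (fun i => W i ω) k
    simp only [Set.mem_setOf_eq, Set.mem_Ioi, e0]
  rw [hset]
  have haex := ae_pi_Ioo μ hμae (k+1)
  have hcoord : ∀ᵐ x ∂(Measure.pi fun _ : Fin (k+1) => μ),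
      0 < q0 x ∧ q0 x ≤ 1 := by
    filter_upwards [haex] with x hx
    exact ⟨Finset.prod_pos fun i _ => (hx i.castSucc).1,
      Finset.prod_le_one (fun i _ => (hx i.castSucc).1.le) (fun i _ => (hx i.castSucc).2.le)⟩
  have hνs : ∀ᵐ x ∂(Measure.pi fun _ : Fin (k+1) => μ),
      (volume.restrict (Set.Ioo (0:ℝ) 1)) (Set.Ioi (q0 x))
        = ENNReal.ofReal (1 - q0 x) ∧ (1 - q0 x) ∈ Set.Icc (0:ℝ) 1 := by
    filter_upwards [hcoord] with x hx
    exact ⟨nu_Ioi hx.1 hx.2, by constructor <;> [linarith [hx.2]; linarith [hx.1]]⟩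
  have key := prob_forall_mem W U hWmeas hUmeas hindep hWid hUunif (k+1) n
    (fun x => Set.Ioi (q0 x))
    (by
      have : {p : (Fin (k+1) → ℝ) × ℝ | p.2 ∈ Set.Ioi (q0 p.1)}
          = {p : (Fin (k+1) → ℝ) × ℝ | q0 p.1 < p.2} := by
        ext p; simp [Set.mem_Ioi]
      rw [this]
      exact measurableSet_lt (hq0m.comp measurable_fst) measurable_snd)
    (fun x => 1 - q0 x) (measurable_const.sub hq0m) hνs
  have hI : ∫ x, (1 - q0 x) ^ n ∂(Measure.pi fun _ : Fin (k+1) => μ)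
      = ∑ j ∈ Finset.range (n+1), (n.choose j : ℝ) *
          ((-1)^j * (∫ t, t^j ∂μ)^k) := by
    rw [hq0]
    exact intB μ hμae k n
  constructor
  · rw [key, hI]
  · rw [← hI]
    apply integral_nonneg_of_ae
    filter_upwards [hcoord] with x hx
    exact pow_nonneg (by linarith [hx.1, hx.2]) n

include hWmeas hindep hWid in
lemma mapW_pi (m : ℕ) :
    Measure.map (fun ω (i : Fin m) => W i ω) ℙ
      = Measure.pi (fun _ : Fin m => Measure.map (W 0) ℙ) := by
  have hWv : iIndepFun (fun i : Fin m => W i.val) ℙ :=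
    iIndepFun_reindex hindep
      (e := fun i : Fin m => (Sum.inl i.val : ℕ ⊕ ℕ))
      (fun a b hab => Fin.val_injective (Sum.inl.inj hab))
  rw [map_pi_of_iIndepFun (fun i : Fin m => W i.val) (fun i => hWmeas i.val) hWv]
  exact congrArg Measure.pi (funext fun i => hWid i)

include hWmeas hindep hWid hWval in
lemma ae_tendsto : ∀ᵐ ω ∂ℙ, (∀ i, W i ω ∈ Set.Ioo (0:ℝ) 1) →
    Tendsto (fun k => ∏ i ∈ Finset.range k, W i ω) atTop (𝓝 (0:ℝ)) := by
  classical
  set μ := Measure.map (W 0) ℙ with hμdef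
  haveI : IsProbabilityMeasure μ := Measure.isProbabilityMeasure_map (hWmeas 0).aemeasurable
  have hμae : ∀ᵐ t ∂μ, t ∈ Set.Ioo (0:ℝ) 1 :=
    (ae_map_iff (hWmeas 0).aemeasurable measurableSet_Ioo).2 (hWval 0)
  set c := ∫ t, t ∂μ with hcdef
  have hc0 : 0 ≤ c := integral_nonneg_of_ae (by
    filter_upwards [hμae] with t ht; exact ht.1.le)
  have hintid : Integrable (fun t : ℝ => t) μ :=
    Integrable.mono' (integrable_const 1) measurable_id.aestronglyMeasurable (by
      filter_upwards [hμae] with t ht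
      rw [Real.norm_eq_abs, abs_of_nonneg ht.1.le]
      exact ht.2.le)
  have hc1 : c < 1 := by
    have hnn : 0 ≤ᵐ[μ] fun t : ℝ => 1 - t := by
      filter_upwards [hμae] with t ht
      exact (by linarith [ht.2] : (0:ℝ) ≤ 1 - t)
    have hint1t : Integrable (fun t : ℝ => 1 - t) μ := (integrable_const 1).sub hintid
    have hpos : 0 < ∫ t, (1 - t) ∂μ := by
      rcases (integral_nonneg_of_ae hnn).lt_or_eq with h | h
      · exact h
      · exfalso
        have hzero : (fun t : ℝ => 1 - t) =ᵐ[μ] 0 :=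
          (integral_eq_zero_iff_of_nonneg_ae hnn hint1t).1 h.symm
        haveI : (ae μ).NeBot := ae_neBot.2 (IsProbabilityMeasure.ne_zero μ)
        obtain ⟨t, h1, h2⟩ := (hzero.and hμae).exists
        have : (1:ℝ) - t = 0 := h1
        have := h2.2
        linarith
    have heq : ∫ t, (1-t) ∂μ = 1 - c := by
      rw [integral_sub (integrable_const 1) hintid, integral_const]
      simp [hcdef]
    linarith
  have hq : ∀ (k : ℕ) (ε : ℝ), 0 < ε →
      ℙ {ω | ε ≤ ∏ i ∈ Finset.range k, W i ω} ≤ ENNReal.ofReal (c^k / ε) := by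
    intro k ε hε
    have hmap := mapW_pi W U hWmeas hindep hWid k
    have hqm : Measurable (fun x : Fin k → ℝ => ∏ i, x i) :=
      Finset.measurable_prod _ fun i _ => measurable_pi_apply i
    have hsetm : MeasurableSet {x : Fin k → ℝ | ε ≤ ∏ i, x i} :=
      measurableSet_le measurable_const hqm
    have hpre : ℙ {ω | ε ≤ ∏ i ∈ Finset.range k, W i ω}
        = (Measure.pi fun _ : Fin k => μ) {x | ε ≤ ∏ i, x i} := by
      rw [← hmap, Measure.map_apply (measurable_pi_lambda (fun ω (i : Fin k) => W i.val ω) fun i => hWmeas i.val) hsetm]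
      congr 1
      ext ω
      simp only [Set.mem_setOf_eq, Set.mem_preimage]
      rw [Fin.prod_univ_eq_prod_range (fun i => W i ω) k]
    have haex := ae_pi_Ioo μ hμae k
    have hqnn : 0 ≤ᵐ[Measure.pi fun _ : Fin k => μ] (fun x : Fin k → ℝ => ∏ i, x i) := by
      filter_upwards [haex] with x hx
      exact (Finset.prod_nonneg fun i _ => (hx i).1.le : (0:ℝ) ≤ _)
    have hqint : Integrable (fun x : Fin k → ℝ => ∏ i, x i) (Measure.pi fun _ : Fin k => μ) := by
      apply Integrable.mono' (integrable_const 1) hqm.aestronglyMeasurable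
      filter_upwards [haex] with x hx
      rw [Real.norm_eq_abs, abs_of_nonneg (Finset.prod_nonneg fun i _ => (hx i).1.le)]
      exact Finset.prod_le_one (fun i _ => (hx i).1.le) (fun i _ => (hx i).2.le)
    have hmarkov := mul_meas_ge_le_integral_of_nonneg hqnn hqint ε
    have hval : ∫ x, (∏ i, x i) ∂(Measure.pi fun _ : Fin k => μ) = c^k := by
      have h := integral_pi_prod' k (fun _ => μ) (fun _ => inferInstance) (fun _ t => t)
      rw [h, Finset.prod_const, Finset.card_univ, Fintype.card_fin]
    rw [hval] at hmarkov
    rw [hpre]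
    have hne : (Measure.pi fun _ : Fin k => μ) {x | ε ≤ ∏ i, x i} ≠ ⊤ := measure_ne_top _ _
    have hbd : ((Measure.pi fun _ : Fin k => μ) {x | ε ≤ ∏ i, x i}).toReal ≤ c^k / ε := by
      rw [le_div_iff₀ hε]
      unfold Measure.real at hmarkov
      linarith [hmarkov]
    calc (Measure.pi fun _ : Fin k => μ) {x | ε ≤ ∏ i, x i}
        = ENNReal.ofReal (((Measure.pi fun _ : Fin k => μ) {x | ε ≤ ∏ i, x i}).toReal) :=
          (ENNReal.ofReal_toReal hne).symm
      _ ≤ ENNReal.ofReal (c^k / ε) := ENNReal.ofReal_le_ofReal hbd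
  rw [ae_iff]
  have hsub : {ω | ¬ ((∀ i, W i ω ∈ Set.Ioo (0:ℝ) 1) →
        Tendsto (fun k => ∏ i ∈ Finset.range k, W i ω) atTop (𝓝 (0:ℝ)))}
      ⊆ ⋃ m : ℕ, {ω | ∀ k, 1/((m:ℝ)+1) ≤ ∏ i ∈ Finset.range k, W i ω} := by
    intro ω hω
    rw [Set.mem_setOf_eq, Classical.not_imp] at hω
    obtain ⟨hgood, hnt⟩ := hω
    have hpos : ∀ k, 0 < ∏ i ∈ Finset.range k, W i ω :=
      fun k => Finset.prod_pos fun i _ => (hgood i).1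
    have hanti : Antitone fun k => ∏ i ∈ Finset.range k, W i ω := by
      apply antitone_nat_of_succ_le
      intro k
      rw [Finset.prod_range_succ]
      calc (∏ i ∈ Finset.range k, W i ω) * W k ω ≤ (∏ i ∈ Finset.range k, W i ω) * 1 :=
            mul_le_mul_of_nonneg_left (hgood k).2.le (hpos k).le
        _ = ∏ i ∈ Finset.range k, W i ω := mul_one _
    have hbdd : BddBelow (Set.range fun k => ∏ i ∈ Finset.range k, W i ω) :=
      ⟨0, fun y ⟨k, hk⟩ => hk ▸ (hpos k).le⟩
    have hconv := tendsto_atTop_ciInf hanti hbdd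
    have hinfpos : 0 < ⨅ k, ∏ i ∈ Finset.range k, W i ω := by
      rcases (le_ciInf fun k => (hpos k).le).lt_or_eq with h | h
      · exact h
      · exact absurd (h ▸ hconv) hnt
    obtain ⟨m, hm⟩ := exists_nat_one_div_lt hinfpos
    refine Set.mem_iUnion.2 ⟨m, fun k => ?_⟩
    exact le_trans hm.le (ciInf_le hbdd k)
  refine measure_mono_null hsub (measure_iUnion_null fun m => ?_)
  have hεpos : 0 < 1/((m:ℝ)+1) := by positivity
  have hle : ∀ k : ℕ, ℙ {ω | ∀ k', 1/((m:ℝ)+1) ≤ ∏ i ∈ Finset.range k', W i ω}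
      ≤ ENNReal.ofReal (c^k / (1/((m:ℝ)+1))) :=
    fun k => le_trans (measure_mono fun ω hω => hω k) (hq k _ hεpos)
  have htend : Tendsto (fun k : ℕ => ENNReal.ofReal (c^k / (1/((m:ℝ)+1)))) atTop (𝓝 0) := by
    have h1 : Tendsto (fun k : ℕ => c^k / (1/((m:ℝ)+1))) atTop (𝓝 (0:ℝ)) := by
      have h2 := (tendsto_pow_atTop_nhds_zero_of_lt_one hc0 hc1).div_const (1/((m:ℝ)+1))
      simpa using h2
    have h3 := ENNReal.tendsto_ofReal h1
    simpa using h3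
  exact le_antisymm (ge_of_tendsto' htend hle) zero_le

end Main



open scoped Classical in
lemma sieve_pointwise (w u : ℕ → ℝ) (hw : ∀ i, w i ∈ Set.Ioo (0:ℝ) 1)
    (hu : ∀ j, u j ∈ Set.Ioo (0:ℝ) 1)
    (hQt : Tendsto (fun k => ∏ i ∈ Finset.range k, w i) atTop (𝓝 (0:ℝ))) (n : ℕ) :
    ((sieveL w u n : ℕ) : ℝ≥0∞)
      = ∑' k : ℕ, (if ((∀ j < n, ¬((∏ i ∈ Finset.range (k+1), w i) < u j ∧
            u j ≤ ∏ i ∈ Finset.range k, w i)) ∧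
          ¬(∀ j < n, (∏ i ∈ Finset.range k, w i) < u j)) then (1:ℝ≥0∞) else 0) := by
  set Q : ℕ → ℝ := fun k => ∏ i ∈ Finset.range k, w i with hQdef
  have hQpos : ∀ k, 0 < Q k := fun k => Finset.prod_pos fun i _ => (hw i).1
  have hanti : Antitone Q := by
    apply antitone_nat_of_succ_le
    intro k
    have : Q (k+1) = Q k * w k := Finset.prod_range_succ w k
    rw [this]
    calc Q k * w k ≤ Q k * 1 := mul_le_mul_of_nonneg_left (hw k).2.le (hQpos k).le
      _ = Q k := mul_one _
  have hne : ∀ x : ℝ, 0 < x → {k : ℕ | Q k < x}.Nonempty := by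
    intro x hx
    obtain ⟨k, hk⟩ := (hQt.eventually (gt_mem_nhds hx)).exists
    exact ⟨k, hk⟩
  have hbox_le : ∀ (x : ℝ), 0 < x → ∀ m : ℕ, (sieveBox w x ≤ m ↔ Q m < x) := by
    intro x hx m
    constructor
    · intro h
      have hmem : sInf {k : ℕ | Q k < x} ∈ {k : ℕ | Q k < x} := Nat.sInf_mem (hne x hx)
      calc Q m ≤ Q (sInf {k : ℕ | Q k < x}) := hanti h
        _ < x := hmem
    · intro h
      exact Nat.sInf_le h
  have hbox_eq : ∀ (x : ℝ), 0 < x → ∀ k : ℕ,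
      (sieveBox w x = k + 1 ↔ (Q (k+1) < x ∧ x ≤ Q k)) := by
    intro x hx k
    have h1 := hbox_le x hx (k+1)
    have h2 := hbox_le x hx k
    constructor
    · intro h
      have hle : sieveBox w x ≤ k+1 := h.le
      have hk1 : Q (k+1) < x := h1.1 hle
      have hnle : ¬ (sieveBox w x ≤ k) := by omega
      have := (not_iff_not.2 h2).1 hnle
      exact ⟨hk1, not_lt.1 this⟩
    · rintro ⟨ha, hb⟩
      have h1' : sieveBox w x ≤ k+1 := h1.2 ha
      have h2' : ¬ sieveBox w x ≤ k := (not_iff_not.2 h2).2 (not_lt.2 hb)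
      omega
  set b : ℕ → ℕ := fun j => sieveBox w (u j) with hbdef
  have hb_le : ∀ j m, (b j ≤ m ↔ Q m < u j) := fun j m => hbox_le _ (hu j).1 m
  have hb_eq : ∀ j k, (b j = k+1 ↔ (Q (k+1) < u j ∧ u j ≤ Q k)) :=
    fun j k => hbox_eq _ (hu j).1 k
  have hb_pos : ∀ j, 1 ≤ b j := by
    intro j
    by_contra h
    have h0 : b j ≤ 0 := by omega
    have h1 := (hb_le j 0).1 h0
    have h2 : Q 0 = 1 := Finset.prod_range_zero w
    rw [h2] at h1
    exact absurd h1 (not_lt.2 (hu j).2.le)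
  set M := sieveM w u n with hMdef
  set occ := (Finset.range n).image b with hoccdef
  have hMb : M = (Finset.range n).sup b := rfl
  have hocc_sub : occ ⊆ Finset.Icc 1 M := by
    intro m hm
    rcases Finset.mem_image.1 hm with ⟨j, hj, rfl⟩
    exact Finset.mem_Icc.2 ⟨hb_pos j, hMb ▸ Finset.le_sup hj⟩
  have hL : sieveL w u n = (Finset.Icc 1 M \ occ).card := by
    rw [Finset.card_sdiff_of_subset hocc_sub, Nat.card_Icc]
    rfl
  have hcond : ∀ k : ℕ, (((∀ j < n, ¬(Q (k+1) < u j ∧ u j ≤ Q k)) ∧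
        ¬(∀ j < n, Q k < u j))) ↔ (k+1) ∈ Finset.Icc 1 M \ occ := by
    intro k
    have hA : (∀ j < n, ¬(Q (k+1) < u j ∧ u j ≤ Q k)) ↔ (∀ j < n, b j ≠ k+1) :=
      forall₂_congr fun j _ => (not_congr (hb_eq j k)).symm
    have hB : (∀ j < n, Q k < u j) ↔ (∀ j < n, b j ≤ k) :=
      forall₂_congr fun j _ => (hb_le j k).symm
    rw [hA, hB, Finset.mem_sdiff, Finset.mem_Icc]
    constructor
    · rintro ⟨hAll, hEx⟩
      push_neg at hEx
      obtain ⟨j, hj, hbj⟩ := hEx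
      refine ⟨⟨by omega, ?_⟩, ?_⟩
      · exact le_trans (by omega) (hMb ▸ Finset.le_sup (Finset.mem_range.2 hj))
      · intro hmem
        rcases Finset.mem_image.1 hmem with ⟨j', hj', hbj'⟩
        exact hAll j' (Finset.mem_range.1 hj') hbj'
    · rintro ⟨⟨_, hM2⟩, hnot⟩
      constructor
      · intro j hj heq
        exact hnot (Finset.mem_image.2 ⟨j, Finset.mem_range.2 hj, heq⟩)
      · intro hall
        rw [hMb] at hM2
        obtain ⟨j, hj, hbj⟩ := (Finset.le_sup_iff (Nat.succ_pos k)).1 hM2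
        have := hall j (Finset.mem_range.1 hj)
        omega
  have hzero : ∀ k : ℕ, k ∉ Finset.range M →
      (if ((∀ j < n, ¬(Q (k+1) < u j ∧ u j ≤ Q k)) ∧
          ¬(∀ j < n, Q k < u j)) then (1:ℝ≥0∞) else 0) = 0 := by
    intro k hk
    have hkM : M ≤ k := by
      by_contra h
      exact hk (Finset.mem_range.2 (not_le.1 h))
    rw [if_neg]
    intro hC
    have h1 := (hcond k).1 hC
    have h2 := (Finset.mem_Icc.1 (Finset.mem_sdiff.1 h1).1).2
    omega
  rw [tsum_eq_sum hzero]
  have hcongr : ∀ k ∈ Finset.range M,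
      (if ((∀ j < n, ¬(Q (k+1) < u j ∧ u j ≤ Q k)) ∧
          ¬(∀ j < n, Q k < u j)) then (1:ℝ≥0∞) else 0)
      = (if (k+1) ∈ Finset.Icc 1 M \ occ then (1:ℝ≥0∞) else 0) :=
    fun k _ => if_congr (hcond k) rfl rfl
  rw [Finset.sum_congr rfl hcongr, Finset.sum_boole]
  have hcard : ((Finset.range M).filter fun k => (k+1) ∈ Finset.Icc 1 M \ occ).card
      = (Finset.Icc 1 M \ occ).card := by
    apply Finset.card_bij (fun k _ => k + 1)
    · intro a ha
      exact (Finset.mem_filter.1 ha).2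
    · intro a _ b _ h
      omega
    · intro m hm
      have h1 := Finset.mem_Icc.1 (Finset.mem_sdiff.1 hm).1
      exact ⟨m - 1, Finset.mem_filter.2 ⟨Finset.mem_range.2 (by omega),
        by rwa [Nat.sub_add_cancel h1.1]⟩, by omega⟩
  rw [hcard, hL]

theorem mean_empty_boxes_binomial_formula
    {Ω : Type*} [MeasureSpace Ω] [IsProbabilityMeasure (ℙ : Measure Ω)]
    (W U : ℕ → Ω → ℝ) (hWmeas : ∀ k, Measurable (W k)) (hUmeas : ∀ j, Measurable (U j))
    (hindep : iIndepFun (Sum.elim W U : ℕ ⊕ ℕ → Ω → ℝ) ℙ)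
    (hWid : ∀ k, Measure.map (W k) ℙ = Measure.map (W 0) ℙ)
    (hWval : ∀ k, ∀ᵐ ω ∂ℙ, W k ω ∈ Set.Ioo (0 : ℝ) 1)
    (hUunif : ∀ j, Measure.map (U j) ℙ = volume.restrict (Set.Ioo (0 : ℝ) 1))
    (n : ℕ) (hn : 1 ≤ n) :
    (∫ ω, (sieveL (fun k => W k ω) (fun j => U j ω) n : ℝ) ∂ℙ) =
      ∑ k ∈ Finset.Icc 1 n, (-1 : ℝ) ^ (k + 1) * (n.choose k : ℝ) *
        (1 - ∫ ω, (1 - W 0 ω) ^ k ∂ℙ) / (1 - ∫ ω, (W 0 ω) ^ k ∂ℙ) := by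
  classical
  set μ := Measure.map (W 0) ℙ with hμdef
  haveI : IsProbabilityMeasure μ := Measure.isProbabilityMeasure_map (hWmeas 0).aemeasurable
  have hμae : ∀ᵐ t ∂μ, t ∈ Set.Ioo (0:ℝ) 1 :=
    (ae_map_iff (hWmeas 0).aemeasurable measurableSet_Ioo).2 (hWval 0)
  -- moments
  have hmwP : ∀ j : ℕ, (∫ t, t^j ∂μ) = ∫ ω, (W 0 ω)^j ∂ℙ := fun j =>
    integral_map (hWmeas 0).aemeasurable ((measurable_id.pow_const j).aestronglyMeasurable)
  have hmvP : ∀ j : ℕ, (∫ t, (1-t)^j ∂μ) = ∫ ω, (1 - W 0 ω)^j ∂ℙ := fun j =>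
    integral_map (hWmeas 0).aemeasurable
      (((measurable_const.sub measurable_id).pow_const j).aestronglyMeasurable)
  have hmw0 : ∀ j : ℕ, 0 ≤ ∫ t, t^j ∂μ := fun j => integral_nonneg_of_ae (by
    filter_upwards [hμae] with t ht
    exact pow_nonneg ht.1.le j)
  have hmwlt : ∀ j : ℕ, 1 ≤ j → (∫ t, t^j ∂μ) < 1 := by
    intro j hj
    have hintp : Integrable (fun t : ℝ => t^j) μ := by
      apply Integrable.mono' (integrable_const 1) (measurable_id.pow_const j).aestronglyMeasurable
      filter_upwards [hμae] with t ht
      simp only [id_eq]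
      rw [Real.norm_eq_abs, abs_of_nonneg (pow_nonneg ht.1.le j)]
      exact pow_le_one₀ ht.1.le ht.2.le
    have hnn : 0 ≤ᵐ[μ] fun t : ℝ => 1 - t^j := by
      filter_upwards [hμae] with t ht
      have hle : t^j ≤ 1 := pow_le_one₀ (a := t) (n := j) ht.1.le ht.2.le
      exact (by linarith : (0:ℝ) ≤ 1 - t^j)
    have hint1t : Integrable (fun t : ℝ => 1 - t^j) μ := (integrable_const 1).sub hintp
    have hpos : 0 < ∫ t, (1 - t^j) ∂μ := by
      rcases (integral_nonneg_of_ae hnn).lt_or_eq with h | h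
      · exact h
      · exfalso
        have hzero : (fun t : ℝ => 1 - t^j) =ᵐ[μ] 0 :=
          (integral_eq_zero_iff_of_nonneg_ae hnn hint1t).1 h.symm
        haveI : (ae μ).NeBot := ae_neBot.2 (IsProbabilityMeasure.ne_zero μ)
        obtain ⟨t, h1, h2⟩ := (hzero.and hμae).exists
        have h3 : (1:ℝ) - t^j = 0 := h1
        have h4 : t^j < 1 := pow_lt_one₀ h2.1.le h2.2 (by omega)
        linarith
    have heq : ∫ t, (1 - t^j) ∂μ = 1 - ∫ t, t^j ∂μ := by
      rw [integral_sub (integrable_const 1) hintp, integral_const]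
      simp
    linarith
  -- the good event
  have hUae : ∀ j : ℕ, ∀ᵐ ω ∂ℙ, U j ω ∈ Set.Ioo (0:ℝ) 1 := by
    intro j
    have hpre : ℙ (U j ⁻¹' Set.Ioo (0:ℝ) 1) = 1 := by
      rw [← Measure.map_apply (hUmeas j) measurableSet_Ioo, hUunif j,
        Measure.restrict_apply measurableSet_Ioo, Set.inter_self, Real.volume_Ioo]
      norm_num
    rw [ae_iff]
    have : {ω | ¬ U j ω ∈ Set.Ioo (0:ℝ) 1} = (U j ⁻¹' Set.Ioo (0:ℝ) 1)ᶜ := rfl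
    rw [this, prob_compl_eq_one_sub ((hUmeas j) measurableSet_Ioo), hpre, tsub_self]
  have hGood : ∀ᵐ ω ∂ℙ, (∀ i, W i ω ∈ Set.Ioo (0:ℝ) 1) ∧ (∀ j, U j ω ∈ Set.Ioo (0:ℝ) 1) ∧
      Tendsto (fun k => ∏ i ∈ Finset.range k, W i ω) atTop (𝓝 (0:ℝ)) := by
    have hWall : ∀ᵐ ω ∂ℙ, ∀ i, W i ω ∈ Set.Ioo (0:ℝ) 1 := ae_all_iff.2 hWval
    have hUall : ∀ᵐ ω ∂ℙ, ∀ j, U j ω ∈ Set.Ioo (0:ℝ) 1 := ae_all_iff.2 hUae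
    have hT := ae_tendsto W U hWmeas hindep hWid hWval
    filter_upwards [hWall, hUall, hT] with ω h1 h2 h3
    exact ⟨h1, h2, h3 h1⟩
  -- events
  set A : ℕ → Set Ω := fun k => {ω | ∀ j : Fin n, ¬((∏ i ∈ Finset.range (k+1), W i ω) < U j ω ∧
      U j ω ≤ ∏ i ∈ Finset.range k, W i ω)} with hAdef
  set B : ℕ → Set Ω := fun k => {ω | ∀ j : Fin n, (∏ i ∈ Finset.range k, W i ω) < U j ω}
    with hBdef
  have hQfm : ∀ k : ℕ, Measurable (fun ω => ∏ i ∈ Finset.range k, W i ω) :=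
    fun k => Finset.measurable_prod _ fun i _ => hWmeas i
  have hAm : ∀ k, MeasurableSet (A k) := by
    intro k
    have : A k = ⋂ j : Fin n, ({ω | (∏ i ∈ Finset.range (k+1), W i ω) < U j ω} ∩
        {ω | U j ω ≤ ∏ i ∈ Finset.range k, W i ω})ᶜ := by
      ext ω; simp [hAdef, Set.mem_iInter]
    rw [this]
    exact MeasurableSet.iInter fun j =>
      ((measurableSet_lt (hQfm (k+1)) (hUmeas j)).inter
        (measurableSet_le (hUmeas j) (hQfm k))).compl
  have hBm : ∀ k, MeasurableSet (B k) := by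
    intro k
    have : B k = ⋂ j : Fin n, {ω | (∏ i ∈ Finset.range k, W i ω) < U j ω} := by
      ext ω; simp [hBdef, Set.mem_iInter]
    rw [this]
    exact MeasurableSet.iInter fun j => measurableSet_lt (hQfm k) (hUmeas j)
  have hBsubA : ∀ k, B k ⊆ A k := by
    intro k ω hω j hcontra
    exact absurd (hω j) (not_lt.2 hcontra.2)
  -- probabilities
  have hprobA := fun k => probA W U hWmeas hUmeas hindep hWid hWval hUunif n k
  have hprobB := fun k => probB W U hWmeas hUmeas hindep hWid hWval hUunif n k
  set pA : ℕ → ℝ := fun k => ∑ j ∈ Finset.range (n+1), (n.choose j : ℝ) *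
      ((-1)^j * ((∫ t, t^j ∂μ)^k * (∫ t, (1-t)^j ∂μ))) with hpAdef
  set pB : ℕ → ℝ := fun k => ∑ j ∈ Finset.range (n+1), (n.choose j : ℝ) *
      ((-1)^j * (∫ t, t^j ∂μ)^k) with hpBdef
  have hPA : ∀ k, ℙ (A k) = ENNReal.ofReal (pA k) := fun k => (hprobA k).1
  have hPB : ∀ k, ℙ (B k) = ENNReal.ofReal (pB k) := fun k => (hprobB k).1
  -- pointwise identity
  have hptwise : ∀ᵐ ω ∂ℙ, ((sieveL (fun i => W i ω) (fun j => U j ω) n : ℕ) : ℝ≥0∞)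
      = ∑' k, Set.indicator ((A k) \ (B k)) (fun _ => (1:ℝ≥0∞)) ω := by
    filter_upwards [hGood] with ω hω
    obtain ⟨h1, h2, h3⟩ := hω
    rw [sieve_pointwise (fun i => W i ω) (fun j => U j ω) h1 h2 h3 n]
    apply tsum_congr
    intro k
    rw [Set.indicator_apply]
    apply if_congr _ rfl rfl
    constructor
    · rintro ⟨hAk, hBk⟩
      constructor
      · exact fun j => hAk j.val j.isLt
      · intro hmem
        exact hBk (fun j hj => hmem ⟨j, hj⟩)
    · rintro ⟨hAk, hBk⟩
      constructor
      · exact fun j hj => hAk ⟨j, hj⟩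
      · intro hall
        exact hBk (fun j => hall j.val j.isLt)
  -- measurability of the sieveL function
  have hmeasG : Measurable (fun ω => ∑' k, Set.indicator ((A k) \ (B k))
      (fun _ => (1:ℝ≥0∞)) ω) :=
    Measurable.ennreal_tsum fun k => measurable_const.indicator ((hAm k).diff (hBm k))
  have haesm : AEStronglyMeasurable
      (fun ω => ((sieveL (fun i => W i ω) (fun j => U j ω) n : ℕ) : ℝ)) ℙ := by
    apply AEStronglyMeasurable.congr (hmeasG.ennreal_toReal).aestronglyMeasurable
    filter_upwards [hptwise] with ω hω
    rw [← hω]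
    simp
  -- to lintegral
  rw [integral_eq_lintegral_of_nonneg_ae
    (Eventually.of_forall fun ω => Nat.cast_nonneg _) haesm]
  have hlin : ∫⁻ ω, ENNReal.ofReal ((sieveL (fun i => W i ω) (fun j => U j ω) n : ℕ) : ℝ) ∂ℙ
      = ∑' k, ℙ ((A k) \ (B k)) := by
    calc ∫⁻ ω, ENNReal.ofReal ((sieveL (fun i => W i ω) (fun j => U j ω) n : ℕ) : ℝ) ∂ℙ
        = ∫⁻ ω, ((sieveL (fun i => W i ω) (fun j => U j ω) n : ℕ) : ℝ≥0∞) ∂ℙ :=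
          lintegral_congr fun ω => ENNReal.ofReal_natCast _
      _ = ∫⁻ ω, ∑' k, Set.indicator ((A k) \ (B k)) (fun _ => (1:ℝ≥0∞)) ω ∂ℙ :=
          lintegral_congr_ae hptwise
      _ = ∑' k, ∫⁻ ω, Set.indicator ((A k) \ (B k)) (fun _ => (1:ℝ≥0∞)) ω ∂ℙ :=
          lintegral_tsum fun k =>
            (measurable_const.indicator ((hAm k).diff (hBm k))).aemeasurable
      _ = ∑' k, ℙ ((A k) \ (B k)) := by
          refine tsum_congr fun k => ?_
          rw [lintegral_indicator ((hAm k).diff (hBm k)), setLIntegral_one]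
  rw [hlin]
  -- diff probabilities
  have hBA_le : ∀ k, pB k ≤ pA k := by
    intro k
    have h1 : ℙ (B k) ≤ ℙ (A k) := measure_mono (hBsubA k)
    rw [hPA k, hPB k] at h1
    exact (ENNReal.ofReal_le_ofReal_iff (hprobA k).2).1 h1
  have hdiff : ∀ k, ℙ ((A k) \ (B k)) = ENNReal.ofReal (pA k - pB k) := by
    intro k
    rw [measure_diff (hBsubA k) (hBm k).nullMeasurableSet (measure_ne_top _ _),
      hPA k, hPB k, ← ENNReal.ofReal_sub _ (hprobB k).2]
  -- summand reorganization
  have hterm : ∀ k : ℕ, pA k - pB k = ∑ j ∈ Finset.Icc 1 n,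
      ((-1:ℝ)^(j+1) * (n.choose j : ℝ) * (1 - ∫ t, (1-t)^j ∂μ)) * (∫ t, t^j ∂μ)^k := by
    intro k
    rw [hpAdef, hpBdef, ← Finset.sum_sub_distrib]
    have hins : Finset.range (n+1) = insert 0 (Finset.Icc 1 n) := by
      ext x
      simp only [Finset.mem_range, Finset.mem_insert, Finset.mem_Icc]
      omega
    rw [hins, Finset.sum_insert (by simp)]
    have hmv0 : (∫ t, (1-t)^(0:ℕ) ∂μ) = 1 := by
      simp
    rw [hmv0]
    have hzero0 : (n.choose 0 : ℝ) * ((-1)^(0:ℕ) * ((∫ t, t^(0:ℕ) ∂μ)^k * 1))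
        - (n.choose 0 : ℝ) * ((-1)^(0:ℕ) * (∫ t, t^(0:ℕ) ∂μ)^k) = 0 := by ring
    rw [hzero0, zero_add]
    refine Finset.sum_congr rfl fun j hj => ?_
    ring
  have hsummand : ∀ j ∈ Finset.Icc 1 n, Summable (fun k : ℕ =>
      ((-1:ℝ)^(j+1) * (n.choose j : ℝ) * (1 - ∫ t, (1-t)^j ∂μ)) * (∫ t, t^j ∂μ)^k) := by
    intro j hj
    exact (summable_geometric_of_lt_one (hmw0 j)
      (hmwlt j (Finset.mem_Icc.1 hj).1)).mul_left _
  have hsummable : Summable (fun k => pA k - pB k) :=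
    (summable_congr hterm).2 (summable_sum hsummand)
  have hnonneg : ∀ k, 0 ≤ pA k - pB k := fun k => sub_nonneg.2 (hBA_le k)
  have htsum : ∑' k, (pA k - pB k) = ∑ j ∈ Finset.Icc 1 n,
      ((-1:ℝ)^(j+1) * (n.choose j : ℝ) * (1 - ∫ t, (1-t)^j ∂μ)) * (1 - ∫ t, t^j ∂μ)⁻¹ := by
    calc ∑' k, (pA k - pB k)
        = ∑' k, ∑ j ∈ Finset.Icc 1 n,
            ((-1:ℝ)^(j+1) * (n.choose j : ℝ) * (1 - ∫ t, (1-t)^j ∂μ)) * (∫ t, t^j ∂μ)^k :=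
          tsum_congr hterm
      _ = ∑ j ∈ Finset.Icc 1 n, ∑' k : ℕ,
            ((-1:ℝ)^(j+1) * (n.choose j : ℝ) * (1 - ∫ t, (1-t)^j ∂μ)) * (∫ t, t^j ∂μ)^k :=
          Summable.tsum_finsetSum hsummand
      _ = _ := by
          refine Finset.sum_congr rfl fun j hj => ?_
          rw [tsum_mul_left, tsum_geometric_of_lt_one (hmw0 j)
            (hmwlt j (Finset.mem_Icc.1 hj).1)]
  calc (∑' k, ℙ ((A k) \ (B k))).toReal
      = (∑' k, ENNReal.ofReal (pA k - pB k)).toReal := by rw [tsum_congr hdiff]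
    _ = (ENNReal.ofReal (∑' k, (pA k - pB k))).toReal := by
        rw [← ENNReal.ofReal_tsum_of_nonneg hnonneg hsummable]
    _ = ∑' k, (pA k - pB k) := ENNReal.toReal_ofReal (tsum_nonneg hnonneg)
    _ = ∑ j ∈ Finset.Icc 1 n,
          ((-1:ℝ)^(j+1) * (n.choose j : ℝ) * (1 - ∫ t, (1-t)^j ∂μ)) * (1 - ∫ t, t^j ∂μ)⁻¹ :=
        htsum
    _ = ∑ k ∈ Finset.Icc 1 n, (-1 : ℝ) ^ (k + 1) * (n.choose k : ℝ) *
        (1 - ∫ ω, (1 - W 0 ω) ^ k ∂ℙ) / (1 - ∫ ω, (W 0 ω) ^ k ∂ℙ) := by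
        refine Finset.sum_congr rfl fun j hj => ?_
        rw [hmwP j, hmvP j, div_eq_mul_inv]
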